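/- Let (Y, 𝒴) be a measurable space, r : Y → ℝ a measurable reward with 0 ≤ r(y) ≤ 1 for all y, 0 < ε ≤ 3/4, and let π, π_k, α be probability measures on Y. Then the upper bound L_α(π) − (J(π) − J(π_k)) ≤ 2·((1 − σ_{α,ε})/σ_{α,ε})·TV(π, α) + 2·TV(π_k, α) holds. -/

import Mathlib

open MeasureTheory

/-- Expected reward `J(m) = ∫ r dm`. -/
noncomputable def J {Y : Type*} [MeasurableSpace Y] (r : Y → ℝ) (m : Measure Y) : ℝ :=
  ∫ y, r y ∂m

/-- Variance `σ_m² = ∫ (r − μ_m)² dm` with `μ_m = J(m)`. -/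
noncomputable def rvar {Y : Type*} [MeasurableSpace Y] (r : Y → ℝ) (m : Measure Y) : ℝ :=
  ∫ y, (r y - J r m) ^ 2 ∂m

/-- Regularized standard deviation `σ_{m,ε} = sqrt(σ_m² + ε)`. -/
noncomputable def sigmaEps {Y : Type*} [MeasurableSpace Y] (r : Y → ℝ) (m : Measure Y)
    (ε : ℝ) : ℝ :=
  Real.sqrt (rvar r m + ε)

/-- Off-policy advantage objective `L_α(π) = (J(π) − μ_α)/σ_{α,ε}`. -/
noncomputable def Ladv {Y : Type*} [MeasurableSpace Y] (r : Y → ℝ) (α π : Measure Y)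
    (ε : ℝ) : ℝ :=
  (J r π - J r α) / sigmaEps r α ε

/-- Total variation distance `TV(m₁,m₂) = sup_{A measurable} |m₁(A) − m₂(A)|`. -/
noncomputable def tvDist {Y : Type*} [MeasurableSpace Y] (m₁ m₂ : Measure Y) : ℝ :=
  ⨆ A : {s : Set Y // MeasurableSet s}, |(m₁ A.1).toReal - (m₂ A.1).toReal|

section Aux

variable {Y : Type*} [MeasurableSpace Y]

lemma tv_bddAbove (m₁ m₂ : Measure Y) [IsProbabilityMeasure m₁] [IsProbabilityMeasure m₂] :
    BddAbove (Set.range fun A : {s : Set Y // MeasurableSet s} =>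
      |(m₁ A.1).toReal - (m₂ A.1).toReal|) := by
  refine ⟨1, ?_⟩
  rintro x ⟨A, rfl⟩
  have h₁ : (m₁ A.1).toReal ≤ 1 := by
    have := prob_le_one (μ := m₁) (s := A.1)
    simpa using ENNReal.toReal_mono ENNReal.one_ne_top this
  have h₂ : (m₂ A.1).toReal ≤ 1 := by
    have := prob_le_one (μ := m₂) (s := A.1)
    simpa using ENNReal.toReal_mono ENNReal.one_ne_top this
  have h₁' : 0 ≤ (m₁ A.1).toReal := ENNReal.toReal_nonneg
  have h₂' : 0 ≤ (m₂ A.1).toReal := ENNReal.toReal_nonneg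
  rw [abs_le]; constructor <;> linarith

lemma tv_nonneg (m₁ m₂ : Measure Y) [IsProbabilityMeasure m₁] [IsProbabilityMeasure m₂] :
    0 ≤ tvDist m₁ m₂ := by
  have := le_ciSup (tv_bddAbove m₁ m₂) ⟨∅, MeasurableSet.empty⟩
  simpa [tvDist] using this.trans' (by simp)

lemma meas_le_tv (m₁ m₂ : Measure Y) [IsProbabilityMeasure m₁] [IsProbabilityMeasure m₂]
    {A : Set Y} (hA : MeasurableSet A) :
    (m₁ A).toReal - (m₂ A).toReal ≤ tvDist m₁ m₂ :=
  (le_abs_self _).trans (le_ciSup (tv_bddAbove m₁ m₂) ⟨A, hA⟩)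

lemma r_integrable {r : Y → ℝ} (hr_meas : Measurable r) (hr : ∀ y, 0 ≤ r y ∧ r y ≤ 1)
    (m : Measure Y) [IsProbabilityMeasure m] : Integrable r m := by
  refine Integrable.mono' (integrable_const 1) hr_meas.aestronglyMeasurable ?_
  filter_upwards with y
  rw [Real.norm_eq_abs, abs_le]
  exact ⟨by linarith [(hr y).1], (hr y).2⟩

/-- Key lemma: `J m₁ - J m₂ ≤ TV(m₁, m₂)` for `0 ≤ r ≤ 1`. -/
lemma J_sub_le_tv {r : Y → ℝ} (hr_meas : Measurable r) (hr : ∀ y, 0 ≤ r y ∧ r y ≤ 1)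
    (m₁ m₂ : Measure Y) [IsProbabilityMeasure m₁] [IsProbabilityMeasure m₂] :
    J r m₁ - J r m₂ ≤ tvDist m₁ m₂ := by
  have hnn : ∀ (m : Measure Y), (0 : Y → ℝ) ≤ᵐ[m] r := fun m =>
    Filter.Eventually.of_forall fun y => (hr y).1
  have hbd : ∀ (m : Measure Y), r ≤ᵐ[m] (fun _ => (1 : ℝ)) := fun m =>
    Filter.Eventually.of_forall fun y => (hr y).2
  have h₁ : J r m₁ = ∫ t in Set.Ioc 0 1, (m₁ {a | t ≤ r a}).toReal :=
    (r_integrable hr_meas hr m₁).integral_eq_integral_Ioc_meas_le (hnn m₁) (hbd m₁)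
  have h₂ : J r m₂ = ∫ t in Set.Ioc 0 1, (m₂ {a | t ≤ r a}).toReal :=
    (r_integrable hr_meas hr m₂).integral_eq_integral_Ioc_meas_le (hnn m₂) (hbd m₂)
  have Fmeas : ∀ (m : Measure Y), Measurable fun t : ℝ => (m {a | t ≤ r a}).toReal := by
    intro m
    refine Measurable.ennreal_toReal ?_
    exact Antitone.measurable fun s t hst => measure_mono fun a ha => hst.trans ha
  have Fint : ∀ (m : Measure Y) [IsProbabilityMeasure m],
      IntegrableOn (fun t : ℝ => (m {a | t ≤ r a}).toReal) (Set.Ioc 0 1) := by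
    intro m _
    refine Integrable.mono' (integrable_const 1) (Fmeas m).aestronglyMeasurable ?_
    filter_upwards with t
    rw [Real.norm_eq_abs, abs_of_nonneg ENNReal.toReal_nonneg]
    exact ENNReal.toReal_mono ENNReal.one_ne_top (prob_le_one)
  rw [h₁, h₂, ← integral_sub (Fint m₁) (Fint m₂)]
  calc ∫ t in Set.Ioc 0 1, ((m₁ {a | t ≤ r a}).toReal - (m₂ {a | t ≤ r a}).toReal)
      ≤ ∫ (_t : ℝ) in Set.Ioc 0 1, tvDist m₁ m₂ := by
        refine setIntegral_mono_on ((Fint m₁).sub (Fint m₂)) (integrableOn_const (by simp [Real.volume_Ioc]) (by simp))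
          measurableSet_Ioc fun t _ => ?_
        exact meas_le_tv m₁ m₂ (hr_meas measurableSet_Ici)
    _ = tvDist m₁ m₂ := by rw [setIntegral_const]; simp [Real.volume_Ioc]

end Aux

/-- Upper bound on the gap between the off-policy GRPO objective and the true policy
improvement, equivalent form of the off-policy improvement lower bound. -/
theorem offpolicy_gap_upper_bound {Y : Type*} [MeasurableSpace Y]
    (r : Y → ℝ) (hr_meas : Measurable r) (hr : ∀ y, 0 ≤ r y ∧ r y ≤ 1)
    (ε : ℝ) (hε : 0 < ε) (hε' : ε ≤ 3 / 4)
    (π πk α : Measure Y)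
    [IsProbabilityMeasure π] [IsProbabilityMeasure πk] [IsProbabilityMeasure α] :
    Ladv r α π ε - (J r π - J r πk) ≤
      2 * ((1 - sigmaEps r α ε) / sigmaEps r α ε) * tvDist π α
        + 2 * tvDist πk α := by
  set σ := sigmaEps r α ε with hσdef
  -- bounds on μ = J r α
  have hrα : Integrable r α := r_integrable hr_meas hr α
  have hμ0 : 0 ≤ J r α := integral_nonneg fun y => (hr y).1
  have hμ1 : J r α ≤ 1 := by
    have : J r α ≤ ∫ _y, (1 : ℝ) ∂α := integral_mono hrα (integrable_const 1) fun y => (hr y).2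
    simpa using this
  -- variance bounds
  have hvar0 : 0 ≤ rvar r α := integral_nonneg fun y => sq_nonneg _
  have hvar : rvar r α ≤ 1 / 4 := by
    set μ := J r α with hμdef
    have hint0 : Integrable (fun y => r y - 2 * μ * r y) α :=
      hrα.sub (hrα.const_mul (2 * μ))
    have hint : Integrable (fun y => r y - 2 * μ * r y + μ ^ 2) α :=
      hint0.add (integrable_const _)
    have hptwise : ∀ y, (r y - μ) ^ 2 ≤ r y - 2 * μ * r y + μ ^ 2 := by
      intro y
      have h1 := (hr y).1
      have h2 := (hr y).2
      nlinarith [sq_nonneg (r y - μ)]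
    have hintsq : Integrable (fun y => (r y - μ) ^ 2) α := by
      refine Integrable.mono' (integrable_const 1) ?_ ?_
      · exact ((hr_meas.sub measurable_const).pow measurable_const).aestronglyMeasurable
      · filter_upwards with y
        rw [Real.norm_eq_abs, abs_of_nonneg (sq_nonneg _)]
        have h1 := (hr y).1
        have h2 := (hr y).2
        nlinarith
    have h1 : rvar r α ≤ ∫ y, (r y - 2 * μ * r y + μ ^ 2) ∂α :=
      integral_mono hintsq hint hptwise
    have h2 : ∫ y, (r y - 2 * μ * r y + μ ^ 2) ∂α = μ - 2 * μ * μ + μ ^ 2 := by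
      rw [integral_add hint0 (integrable_const _),
        integral_sub hrα (hrα.const_mul (2 * μ)), integral_const_mul, integral_const]
      have hJ : (∫ a, r a ∂α) = μ := hμdef.symm
      simp only [measure_univ, probReal_univ, ENNReal.toReal_one, smul_eq_mul, one_mul, hJ]
    rw [h2] at h1
    nlinarith [sq_nonneg (2 * μ - 1)]
  -- σ bounds
  have hσpos : 0 < σ := Real.sqrt_pos.2 (by linarith)
  have hσle1 : σ ≤ 1 := by
    rw [hσdef, sigmaEps, show (1 : ℝ) = Real.sqrt 1 by simp [Real.sqrt_one]]
    exact Real.sqrt_le_sqrt (by linarith)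
  have hcoef : 0 ≤ (1 - σ) / σ := div_nonneg (by linarith) hσpos.le
  -- decomposition
  have hdecomp : Ladv r α π ε - (J r π - J r πk)
      = (1 - σ) / σ * (J r π - J r α) + (J r πk - J r α) := by
    rw [Ladv, ← hσdef]
    field_simp
    ring
  rw [hdecomp]
  have h1 : J r π - J r α ≤ tvDist π α := J_sub_le_tv hr_meas hr π α
  have h2 : J r πk - J r α ≤ tvDist πk α := J_sub_le_tv hr_meas hr πk α
  have htv1 : 0 ≤ tvDist π α := tv_nonneg π α
  have htv2 : 0 ≤ tvDist πk α := tv_nonneg πk α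
  have hA : (1 - σ) / σ * (J r π - J r α) ≤ 2 * ((1 - σ) / σ) * tvDist π α := by
    calc (1 - σ) / σ * (J r π - J r α) ≤ (1 - σ) / σ * tvDist π α :=
          mul_le_mul_of_nonneg_left h1 hcoef
      _ ≤ 2 * ((1 - σ) / σ) * tvDist π α := by nlinarith
  linarith
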